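/- Let V be a form of degree 4 on ℝⁿ. Suppose that for every initial condition x₀ ∈ ℝⁿ there exists a differentiable curve x : [0,∞) → ℝⁿ with x(0) = x₀, x'(t) = −∇V(x(t)) for all t ≥ 0, and x(t) → 0 as t → ∞. Then V is positive definite. -/

import Mathlib

open MvPolynomial Filter

lemma hasDerivAt_eval_comp {n : ℕ} (p : MvPolynomial (Fin n) ℝ) (x : ℝ → Fin n → ℝ)
    (v : Fin n → ℝ) (t : ℝ) (hx : ∀ i, HasDerivAt (fun s => x s i) (v i) t) :
    HasDerivAt (fun s => eval (x s) p) (∑ i, v i * eval (x t) (pderiv i p)) t := by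
  induction p using MvPolynomial.induction_on with
  | C a => simpa using hasDerivAt_const t (a : ℝ)
  | add p q hp hq => simpa [mul_add, Finset.sum_add_distrib] using hp.fun_add hq
  | mul_X p i hp =>
    have h := hp.fun_mul (hx i)
    have : (∑ j, v j * eval (x t) (pderiv j (p * X i))) =
        (∑ j, v j * eval (x t) (pderiv j p)) * x t i + eval (x t) p * v i := by
      simp only [pderiv_mul, map_add, map_mul, eval_X, pderiv_X]
      simp only [mul_add, Finset.sum_add_distrib, Finset.sum_mul]
      congr 1
      · apply Finset.sum_congr rfl; intro j _; ring
      · rw [Finset.sum_eq_single i]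
        · simp [mul_comm]
        · intro j _ hj; simp [Pi.single_apply, hj]
        · simp [mul_comm]
    rw [this]
    simpa [map_mul, eval_X] using h

/-- Let `V` be a quartic form on `ℝⁿ`. Suppose that for every initial condition
`x₀` there is a differentiable curve `x` on `[0, ∞)` with `x 0 = x₀`, `x'(t) = -∇V(x t)` for all
`t ≥ 0`, and `x(t) → 0` as `t → ∞` (i.e. the cubic gradient vector field `ẋ = -∇V(x)` is
globally asymptotically stable). Then `V` is positive definite. -/
theorem positive_definite_of_gradient_flow_GAS
    (n : ℕ) (V : MvPolynomial (Fin n) ℝ) (hVhom : V.IsHomogeneous 4)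
    (hGAS : ∀ x₀ : Fin n → ℝ, ∃ x : ℝ → Fin n → ℝ, x 0 = x₀ ∧
      (∀ t : ℝ, 0 ≤ t → HasDerivAt x (fun i => -eval (x t) (pderiv i V)) t) ∧
      Tendsto x atTop (nhds 0)) :
    ∀ x : Fin n → ℝ, x ≠ 0 → 0 < eval x V := by
  have hV0 : eval (0 : Fin n → ℝ) V = 0 := by
    rw [MvPolynomial.eval_zero]
    exact hVhom.coeff_eq_zero (d := 0) (by simp)
  intro x₀ hx₀
  by_contra hcon
  push_neg at hcon
  obtain ⟨c, hc0, hcderiv, hctend⟩ := hGAS x₀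
  set f : ℝ → ℝ := fun t => eval (c t) V with hf
  set e : ℝ → Fin n → ℝ := fun t i => eval (c t) (pderiv i V) with he
  -- derivative of f
  have hfd : ∀ t : ℝ, 0 ≤ t → HasDerivAt f (-∑ i, (e t i) ^ 2) t := by
    intro t ht
    have := hasDerivAt_eval_comp V c (fun i => -e t i) t (fun i => hasDerivAt_pi.1 (hcderiv t ht) i)
    convert this using 1
    simp [he]
    apply Finset.sum_congr rfl
    intro i _
    ring
  -- f is antitone on [0,∞)
  have hfanti : AntitoneOn f (Set.Ici (0:ℝ)) := by
    apply antitoneOn_of_deriv_nonpos (convex_Ici 0)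
    · intro t ht
      exact (hfd t ht).continuousAt.continuousWithinAt
    · intro t ht
      rw [interior_Ici] at ht
      exact (hfd t ht.le).differentiableAt.differentiableWithinAt
    · intro t ht
      rw [interior_Ici] at ht
      rw [(hfd t ht.le).deriv]
      simp only [neg_nonpos]
      positivity
  -- f tends to 0
  have hftend : Tendsto f atTop (nhds 0) := by
    have h := (MvPolynomial.continuous_eval V).tendsto (0 : Fin n → ℝ)
    rw [hV0] at h
    exact h.comp hctend
  -- f is nonnegative on [0,∞)
  have hfnonneg : ∀ t : ℝ, 0 ≤ t → 0 ≤ f t := by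
    intro t ht
    refine le_of_tendsto hftend ?_
    filter_upwards [eventually_ge_atTop t] with s hs
    exact hfanti ht (ht.trans hs) hs
  -- hence f ≡ 0 on [0,∞)
  have hfzero : ∀ t : ℝ, 0 ≤ t → f t = 0 := by
    intro t ht
    refine le_antisymm ?_ (hfnonneg t ht)
    calc f t ≤ f 0 := hfanti (Set.mem_Ici.2 le_rfl) ht ht
    _ ≤ 0 := by rw [hf]; simp [hc0]; exact hcon
  -- hence the gradient vanishes along the trajectory
  have hezero : ∀ t : ℝ, 0 ≤ t → ∀ i, e t i = 0 := by
    intro t ht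
    have h1 : HasDerivWithinAt f (-∑ i, (e t i) ^ 2) (Set.Ici t) t :=
      (hfd t ht).hasDerivWithinAt
    have h2 : HasDerivWithinAt f 0 (Set.Ici t) t := by
      have : Set.EqOn f (fun _ => (0:ℝ)) (Set.Ici t) := fun s hs => hfzero s (ht.trans hs)
      exact (hasDerivWithinAt_const t _ (0:ℝ)).congr this (hfzero t ht)
    have huniq := h1.derivWithin (uniqueDiffOn_Ici t t Set.self_mem_Ici)
    rw [h2.derivWithin (uniqueDiffOn_Ici t t Set.self_mem_Ici)] at huniq
    have hsum : (∑ i, (e t i) ^ 2) = 0 := by linarith [huniq]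
    intro i
    have := (Finset.sum_eq_zero_iff_of_nonneg (fun i _ => sq_nonneg (e t i))).1 hsum i (Finset.mem_univ i)
    exact (pow_eq_zero_iff two_ne_zero).1 this
  -- the trajectory is constant
  have hconst : ∀ T : ℝ, 0 ≤ T → c T = x₀ := by
    intro T hT
    rw [← hc0]
    refine constant_of_has_deriv_right_zero (f := c) (a := 0) (b := T) ?_ ?_ T (Set.mem_Icc.2 ⟨hT, le_rfl⟩)
    · intro s hs
      exact (hcderiv s hs.1).continuousAt.continuousWithinAt
    · intro s hs
      have : (fun i => -eval (c s) (pderiv i V)) = (0 : Fin n → ℝ) := by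
        funext i
        have h0 : eval (c s) (pderiv i V) = 0 := hezero s hs.1 i
        simp [h0]
      have h := (hcderiv s hs.1).hasDerivWithinAt (s := Set.Ici s)
      rwa [this] at h
  -- contradiction with convergence to 0
  have : x₀ = 0 := by
    have : Tendsto c atTop (nhds x₀) := by
      refine Tendsto.congr' ?_ tendsto_const_nhds
      filter_upwards [eventually_ge_atTop (0:ℝ)] with s hs
      exact (hconst s hs).symm
    exact tendsto_nhds_unique this hctend
  exact hx₀ this
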